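/- Let 0 < t < s < 1 and 1 ≤ q < p < ∞, and let Ω ⊆ ℝ^N be an open bounded set. Then for every u ∈ W^{s,p}(Ω), [u]_{W^{t,q}(Ω)} ≤ ( N ω_N |Ω| (p-q)/( (s-t) p q ) )^{(p-q)/(pq)} · diam(Ω)^{s-t} · [u]_{W^{s,p}(Ω)}. -/

import Mathlib

open MeasureTheory ENNReal Filter Metric Set

noncomputable section

abbrev Euc (N : ℕ) := EuclideanSpace ℝ (Fin N)

/-- Homogeneous Hölder seminorm `[u]_{C^{0,α}(Ω)}`, `ℝ≥0∞`-valued. -/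
noncomputable def holderSemi {N : ℕ} (Ω : Set (Euc N)) (α : ℝ) (u : Euc N → ℝ) : ℝ≥0∞ :=
  ⨆ (x : Ω) (y : Ω) (_ : x.1 ≠ y.1),
    ENNReal.ofReal (|u x.1 - u y.1| / ‖x.1 - y.1‖ ^ α)

/-- `p`-th power of the Gagliardo seminorm `[u]_{W^{s,p}(Ω)}^p`. -/
noncomputable def gagliardoP {N : ℕ} (Ω : Set (Euc N)) (s p : ℝ) (u : Euc N → ℝ) : ℝ≥0∞ :=
  ∫⁻ x in Ω, ∫⁻ y in Ω,
    ENNReal.ofReal (|u x - u y| ^ p / ‖x - y‖ ^ ((N : ℝ) + s * p))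

/-- Gagliardo seminorm `[u]_{W^{s,p}(Ω)}`. -/
noncomputable def gagliardoSemi {N : ℕ} (Ω : Set (Euc N)) (s p : ℝ) (u : Euc N → ℝ) : ℝ≥0∞ :=
  gagliardoP Ω s p u ^ (1 / p)

section AuxLemmas
open MeasureTheory.Measure Bornology

lemma lintegral_polar {E : Type*} [NormedAddCommGroup E] [NormedSpace ℝ E]
    [MeasurableSpace E] [BorelSpace E] [FiniteDimensional ℝ E] [Nontrivial E]
    (μ : Measure E) [μ.IsAddHaarMeasure] (f : ℝ → ℝ≥0∞) (hf : Measurable f) :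
    ∫⁻ x, f ‖x‖ ∂μ = (Module.finrank ℝ E : ℝ≥0∞) * μ (ball 0 1) *
      ∫⁻ y in Ioi (0 : ℝ), ENNReal.ofReal (y ^ (Module.finrank ℝ E - 1)) * f y := by
  calc ∫⁻ x, f ‖x‖ ∂μ = ∫⁻ x in ({(0 : E)}ᶜ : Set E), f ‖x‖ ∂μ := by
        rw [restrict_compl_singleton]
    _ = ∫⁻ x : ({(0 : E)}ᶜ : Set E), f ‖x.1‖ ∂(μ.comap (↑)) :=
        (lintegral_subtype_comap (measurableSet_singleton _).compl _).symm
    _ = ∫⁻ p : sphere (0 : E) 1 × Ioi (0 : ℝ), f p.2.1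
          ∂(μ.toSphere.prod (volumeIoiPow (Module.finrank ℝ E - 1))) := by
        rw [← μ.measurePreserving_homeomorphUnitSphereProd.lintegral_comp_emb
          (Homeomorph.measurableEmbedding _) (fun p => f p.2.1)]
        simp
    _ = μ.toSphere univ * ∫⁻ y : Ioi (0 : ℝ), f y.1 ∂(volumeIoiPow (Module.finrank ℝ E - 1)) := by
        rw [lintegral_prod]
        · simp [lintegral_const, mul_comm]
        · exact (by fun_prop :
            Measurable fun p : sphere (0:E) 1 × Ioi (0:ℝ) => f p.2.1).aemeasurable
    _ = (Module.finrank ℝ E : ℝ≥0∞) * μ (ball 0 1) *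
          ∫⁻ y in Ioi (0 : ℝ), ENNReal.ofReal (y ^ (Module.finrank ℝ E - 1)) * f y := by
        rw [μ.toSphere_apply_univ]
        congr 1
        have hd : volumeIoiPow (Module.finrank ℝ E - 1) =
            (Measure.comap Subtype.val volume).withDensity
              (fun r : Ioi (0:ℝ) => ENNReal.ofReal ((r : ℝ) ^ (Module.finrank ℝ E - 1))) := rfl
        rw [hd, lintegral_withDensity_eq_lintegral_mul _
            (by fun_prop : Measurable fun r : Ioi (0:ℝ) =>
              ENNReal.ofReal ((r : ℝ) ^ (Module.finrank ℝ E - 1)))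
            (by fun_prop : Measurable fun r : Ioi (0:ℝ) => f r.1)]
        simp_rw [Pi.mul_apply]
        rw [lintegral_subtype_comap measurableSet_Ioi
          (fun y : ℝ => ENNReal.ofReal (y ^ (Module.finrank ℝ E - 1)) * f y)]


lemma lintegral_rpow_closedBall {N : ℕ} (hN : 0 < N) {ε : ℝ} (hε : 0 < ε) {D : ℝ} (hD : 0 ≤ D) :
    ∫⁻ z in closedBall (0 : Euc N) D, ENNReal.ofReal (‖z‖ ^ (ε - N)) =
      (N : ℝ≥0∞) * volume (ball (0 : Euc N) 1) * ENNReal.ofReal (D ^ ε / ε) := by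
  haveI : Nontrivial (Euc N) := Module.nontrivial_of_finrank_pos
    (R := ℝ) (by rw [finrank_euclideanSpace_fin]; exact hN)
  set f : ℝ → ℝ≥0∞ :=
    fun r => Set.indicator (Iic D) (fun r => ENNReal.ofReal (r ^ (ε - N))) r with hf
  have hfm : Measurable f := Measurable.indicator (by fun_prop) measurableSet_Iic
  have h1 : ∫⁻ z in closedBall (0 : Euc N) D, ENNReal.ofReal (‖z‖ ^ (ε - N))
      = ∫⁻ z : Euc N, f ‖z‖ := by
    rw [← lintegral_indicator measurableSet_closedBall]
    refine lintegral_congr fun z => ?_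
    show (closedBall (0:Euc N) D).indicator (fun z => ENNReal.ofReal (‖z‖ ^ (ε - (N:ℝ)))) z
        = (Iic D).indicator (fun r => ENNReal.ofReal (r ^ (ε - (N:ℝ)))) ‖z‖
    by_cases hz : ‖z‖ ≤ D
    · rw [Set.indicator_of_mem (mem_closedBall_zero_iff.2 hz),
        Set.indicator_of_mem (Set.mem_Iic.2 hz)]
    · rw [Set.indicator_of_notMem (fun h => hz (mem_closedBall_zero_iff.1 h)),
        Set.indicator_of_notMem (fun h => hz (Set.mem_Iic.1 h))]
  rw [h1, lintegral_polar volume f hfm, finrank_euclideanSpace_fin]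
  congr 1
  calc ∫⁻ y in Ioi (0:ℝ), ENNReal.ofReal (y ^ (N - 1)) * f y
      = ∫⁻ y in Ioi (0:ℝ), Set.indicator (Iic D)
          (fun y => ENNReal.ofReal (y ^ (N - 1)) * ENNReal.ofReal (y ^ (ε - N))) y := by
        refine lintegral_congr fun y => ?_
        simp [hf, Set.indicator_apply, mul_ite]
    _ = ∫⁻ y in Iic D ∩ Ioi (0:ℝ), ENNReal.ofReal (y ^ (N - 1)) * ENNReal.ofReal (y ^ (ε - N)) := by
        rw [lintegral_indicator measurableSet_Iic, Measure.restrict_restrict measurableSet_Iic]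
    _ = ∫⁻ y in Ioc (0:ℝ) D, ENNReal.ofReal (y ^ (ε - 1)) := by
        rw [Set.inter_comm, Set.Ioi_inter_Iic]
        refine setLIntegral_congr_fun measurableSet_Ioc (fun y hy => ?_)
        rw [← ENNReal.ofReal_mul (pow_nonneg hy.1.le _), ← Real.rpow_natCast y (N - 1),
          ← Real.rpow_add hy.1]
        congr 2
        rw [Nat.cast_sub hN]
        push_cast
        ring
    _ = ENNReal.ofReal (∫ y in Ioc (0:ℝ) D, y ^ (ε - 1)) := by
        rw [← ofReal_integral_eq_lintegral_ofReal
          ((intervalIntegral.intervalIntegrable_rpow' (by linarith : (-1:ℝ) < ε - 1)).1)]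
        filter_upwards [ae_restrict_mem measurableSet_Ioc] with y hy
        exact Real.rpow_nonneg hy.1.le _
    _ = ENNReal.ofReal (D ^ ε / ε) := by
        rw [← intervalIntegral.integral_of_le hD, integral_rpow (Or.inl (by linarith))]
        rw [Real.zero_rpow (by linarith : ε - 1 + 1 ≠ 0), sub_add_cancel]
        norm_num

lemma inner_bound {N : ℕ} (hN : 0 < N) {ε : ℝ} (hε : 0 < ε) {Ω : Set (Euc N)}
    (hΩbd : Bornology.IsBounded Ω) {x : Euc N} (hx : x ∈ Ω) :
    ∫⁻ y in Ω, ENNReal.ofReal (‖x - y‖ ^ (ε - N)) ≤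
      (N : ℝ≥0∞) * volume (ball (0 : Euc N) 1) *
        ENNReal.ofReal (Metric.diam Ω ^ ε / ε) := by
  set D := Metric.diam Ω with hD
  have hD0 : 0 ≤ D := Metric.diam_nonneg
  calc ∫⁻ y in Ω, ENNReal.ofReal (‖x - y‖ ^ (ε - N))
      ≤ ∫⁻ y in closedBall x D, ENNReal.ofReal (‖x - y‖ ^ (ε - N)) :=
        lintegral_mono_set fun y hy =>
          mem_closedBall.2 (Metric.dist_le_diam_of_mem hΩbd hy hx)
    _ = ∫⁻ z in closedBall (0 : Euc N) D, ENNReal.ofReal (‖z‖ ^ (ε - N)) := by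
        have hemb : MeasurableEmbedding (fun z : Euc N => z + x) :=
          (MeasurableEquiv.addRight x).measurableEmbedding
        have hmp : MeasurePreserving (fun z : Euc N => z + x) volume volume :=
          measurePreserving_add_right volume x
        have hpre : (fun z : Euc N => z + x) ⁻¹' closedBall x D = closedBall (0 : Euc N) D := by
          ext z
          simp [mem_closedBall, dist_eq_norm, add_sub_cancel_right, mem_closedBall_zero_iff]
        rw [← hmp.setLIntegral_comp_preimage_emb hemb
          (fun y => ENNReal.ofReal (‖x - y‖ ^ (ε - N))) (closedBall x D), hpre]
        refine lintegral_congr fun z => ?_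
        rw [show x - (z + x) = -z by abel, norm_neg]
    _ ≤ _ := by rw [lintegral_rpow_closedBall hN hε hD0]

end AuxLemmas

/-- Hölder-type inequality between Gagliardo seminorms with different parameters. -/
theorem stmt_5 {N : ℕ} (s t p q : ℝ) (ht0 : 0 < t) (hts : t < s) (hs1 : s < 1)
    (hq : 1 ≤ q) (hqp : q < p) (Ω : Set (Euc N)) (hΩ : IsOpen Ω)
    (hΩbd : Bornology.IsBounded Ω) (u : Euc N → ℝ)
    (hmem : MemLp u (ENNReal.ofReal p) (volume.restrict Ω))
    (hgag : gagliardoP Ω s p u ≠ ⊤) :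
    gagliardoSemi Ω t q u ≤
      ENNReal.ofReal
        (((N : ℝ) * (volume (ball (0 : Euc N) 1)).toReal * (volume Ω).toReal *
            (p - q) / ((s - t) * p * q)) ^ ((p - q) / (p * q)) *
          Metric.diam Ω ^ (s - t)) *
        gagliardoSemi Ω s p u := by
  have hq0 : 0 < q := lt_of_lt_of_le one_pos hq
  have hp0 : 0 < p := lt_trans hq0 hqp
  have hpq0 : 0 < p - q := sub_pos.2 hqp
  have hst : 0 < s - t := sub_pos.2 hts
  rcases Nat.eq_zero_or_pos N with hN | hN
  · -- trivial case N = 0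
    subst hN
    have hzero : gagliardoP Ω t q u = 0 := by
      unfold gagliardoP
      have h0 : ∀ x y : Euc 0,
          ENNReal.ofReal (|u x - u y| ^ q / ‖x - y‖ ^ ((0:ℕ) + t * q : ℝ)) = 0 := by
        intro x y
        rw [Subsingleton.elim x y]
        simp [Real.zero_rpow hq0.ne']
      simp only [Nat.cast_zero] at h0 ⊢
      simp only [h0, lintegral_zero]
    rw [gagliardoSemi, hzero, ENNReal.zero_rpow_of_pos (by positivity)]
    exact zero_le
  -- main case
  set D := Metric.diam Ω with hDdef
  have hD0 : 0 ≤ D := Metric.diam_nonneg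
  set ε : ℝ := (s - t) * p * q / (p - q) with hεdef
  have hε0 : 0 < ε := by positivity
  set α : ℝ := ((N : ℝ) + s * p) * q / p with hαdef
  set μ := volume.restrict Ω with hμdef
  haveI : IsFiniteMeasure μ := ⟨by
    rw [hμdef, Measure.restrict_apply_univ]; exact hΩbd.measure_lt_top⟩
  set ν := μ.prod μ with hνdef
  set F : Euc N × Euc N → ℝ≥0∞ :=
    fun z => ENNReal.ofReal (|u z.1 - u z.2| ^ q / ‖z.1 - z.2‖ ^ α) with hFdef
  set G : Euc N × Euc N → ℝ≥0∞ :=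
    fun z => ENNReal.ofReal (‖z.1 - z.2‖ ^ (α - ((N : ℝ) + t * q))) with hGdef
  -- measurability of u on the product
  obtain ⟨v, hvm, hv⟩ := hmem.1.aemeasurable
  have hbad : μ {a | ¬ u a = v a} = 0 := by
    exact ae_iff.1 hv
  have hu1 : AEMeasurable (fun z : Euc N × Euc N => u z.1) ν := by
    refine ⟨fun z => v z.1, hvm.comp measurable_fst, ?_⟩
    refine measure_mono_null (fun z hz => ?_) (show ν ({a | ¬ u a = v a} ×ˢ univ) = 0 by
      rw [hνdef, Measure.prod_prod, hbad, zero_mul])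
    exact ⟨hz, trivial⟩
  have hu2 : AEMeasurable (fun z : Euc N × Euc N => u z.2) ν := by
    refine ⟨fun z => v z.2, hvm.comp measurable_snd, ?_⟩
    refine measure_mono_null (fun z hz => ?_) (show ν ((univ : Set (Euc N)) ×ˢ {a | ¬ u a = v a}) = 0 by
      rw [hνdef, Measure.prod_prod, hbad, mul_zero])
    exact ⟨trivial, hz⟩
  have habs : AEMeasurable (fun z : Euc N × Euc N => |u z.1 - u z.2|) ν :=
    continuous_abs.measurable.comp_aemeasurable (hu1.sub hu2)
  have hnum : AEMeasurable (fun z : Euc N × Euc N => |u z.1 - u z.2| ^ q) ν :=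
    (by fun_prop : Measurable fun x : ℝ => x ^ q).comp_aemeasurable habs
  have hden : Measurable fun z : Euc N × Euc N => ‖z.1 - z.2‖ ^ α := by fun_prop
  have hFm : AEMeasurable F ν := by
    rw [hFdef]
    exact ENNReal.measurable_ofReal.comp_aemeasurable (hnum.div hden.aemeasurable)
  have hGm : Measurable G := by rw [hGdef]; fun_prop
  -- pointwise identities
  have claim1 : ∀ z : Euc N × Euc N,
      ENNReal.ofReal (|u z.1 - u z.2| ^ q / ‖z.1 - z.2‖ ^ ((N : ℝ) + t * q)) = F z * G z := by
    intro z
    rcases eq_or_ne z.1 z.2 with h | h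
    · simp [hFdef, h, _root_.sub_self, abs_zero, Real.zero_rpow hq0.ne', zero_div]
    · have hr : 0 < ‖z.1 - z.2‖ := by rwa [norm_pos_iff, sub_ne_zero]
      rw [hFdef, hGdef, ← ENNReal.ofReal_mul (by positivity)]
      congr 1
      rw [Real.rpow_sub hr]
      have h1 := (Real.rpow_pos_of_pos hr α).ne'
      have h2 := (Real.rpow_pos_of_pos hr ((N : ℝ) + t * q)).ne'
      field_simp
  have claim2 : ∀ z : Euc N × Euc N, F z ^ (p / q) =
      ENNReal.ofReal (|u z.1 - u z.2| ^ p / ‖z.1 - z.2‖ ^ ((N : ℝ) + s * p)) := by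
    intro z
    rw [hFdef, ENNReal.ofReal_rpow_of_nonneg (by positivity)
        (div_nonneg hp0.le hq0.le),
      Real.div_rpow (Real.rpow_nonneg (abs_nonneg _) _) (Real.rpow_nonneg (norm_nonneg _) _),
      ← Real.rpow_mul (abs_nonneg _), ← Real.rpow_mul (norm_nonneg _),
      show q * (p / q) = p by rw [mul_comm]; exact div_mul_cancel₀ p hq0.ne',
      show α * (p / q) = (N : ℝ) + s * p by rw [hαdef]; field_simp; try ring]
  have claim3 : ∀ z : Euc N × Euc N, G z ^ (p / (p - q)) =
      ENNReal.ofReal (‖z.1 - z.2‖ ^ (ε - N)) := by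
    intro z
    rw [hGdef, ENNReal.ofReal_rpow_of_nonneg (Real.rpow_nonneg (norm_nonneg _) _)
        (div_nonneg hp0.le hpq0.le),
      ← Real.rpow_mul (norm_nonneg _),
      show (α - ((N : ℝ) + t * q)) * (p / (p - q)) = ε - N by
        rw [hαdef, hεdef]; field_simp; try ring]
  -- Hölder
  have hconj : (p / q).HolderConjugate (p / (p - q)) := by
    refine Real.holderConjugate_iff.2 ⟨?_, ?_⟩
    · rw [lt_div_iff₀ hq0]; linarith
    · rw [inv_div, inv_div]
      field_simp
      try ring
  have key := ENNReal.lintegral_mul_le_Lp_mul_Lq ν hconj hFm hGm.aemeasurable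
  -- identify the three integrals
  have hPtq : gagliardoP Ω t q u = ∫⁻ z, (F * G) z ∂ν := by
    calc gagliardoP Ω t q u = ∫⁻ x in Ω, ∫⁻ y in Ω, (F * G) (x, y) := by
          unfold gagliardoP
          exact lintegral_congr fun x => lintegral_congr fun y => claim1 (x, y)
      _ = ∫⁻ z, (F * G) z ∂ν := (lintegral_prod _ (hFm.mul hGm.aemeasurable)).symm
  have hPsp : gagliardoP Ω s p u = ∫⁻ z, F z ^ (p / q) ∂ν := by
    calc gagliardoP Ω s p u = ∫⁻ x in Ω, ∫⁻ y in Ω, F (x, y) ^ (p / q) := by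
          unfold gagliardoP
          exact lintegral_congr fun x => lintegral_congr fun y => (claim2 (x, y)).symm
      _ = ∫⁻ z, F z ^ (p / q) ∂ν := (lintegral_prod _ (hFm.pow_const _)).symm
  set C : ℝ≥0∞ := volume Ω *
    ((N : ℝ≥0∞) * volume (ball (0 : Euc N) 1) * ENNReal.ofReal (D ^ ε / ε)) with hCdef
  have hB : ∫⁻ z, G z ^ (p / (p - q)) ∂ν ≤ C := by
    have h1 : ∫⁻ z, G z ^ (p / (p - q)) ∂ν
        = ∫⁻ x in Ω, ∫⁻ y in Ω, ENNReal.ofReal (‖x - y‖ ^ (ε - N)) := by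
      calc ∫⁻ z, G z ^ (p / (p - q)) ∂ν
          = ∫⁻ z : Euc N × Euc N, ENNReal.ofReal (‖z.1 - z.2‖ ^ (ε - N)) ∂ν :=
            lintegral_congr claim3
        _ = _ := lintegral_prod _ (by fun_prop)
    rw [h1, hCdef]
    calc ∫⁻ x in Ω, ∫⁻ y in Ω, ENNReal.ofReal (‖x - y‖ ^ (ε - N))
        ≤ ∫⁻ _ in Ω, ((N : ℝ≥0∞) * volume (ball (0 : Euc N) 1) *
            ENNReal.ofReal (D ^ ε / ε)) := by
          exact lintegral_mono_ae ((ae_restrict_iff' hΩ.measurableSet).2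
            (ae_of_all _ fun x hx => inner_bound hN hε0 hΩbd hx))
      _ = _ := by rw [setLIntegral_const, mul_comm]
  -- combine
  have main : gagliardoP Ω t q u ≤
      gagliardoP Ω s p u ^ (q / p) * C ^ ((p - q) / p) := by
    rw [hPtq, hPsp]
    refine key.trans ?_
    rw [one_div_div, one_div_div]
    exact mul_le_mul' le_rfl (ENNReal.rpow_le_rpow hB (div_nonneg hpq0.le hp0.le))
  have step : gagliardoSemi Ω t q u ≤ C ^ ((p - q) / (p * q)) * gagliardoSemi Ω s p u := by
    rw [gagliardoSemi, gagliardoSemi]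
    calc gagliardoP Ω t q u ^ (1 / q)
        ≤ (gagliardoP Ω s p u ^ (q / p) * C ^ ((p - q) / p)) ^ (1 / q) :=
          ENNReal.rpow_le_rpow main (by positivity)
      _ = gagliardoP Ω s p u ^ (1 / p) * C ^ ((p - q) / (p * q)) := by
          rw [ENNReal.mul_rpow_of_nonneg _ _ (by positivity),
            ← ENNReal.rpow_mul, ← ENNReal.rpow_mul]
          rw [show q / p * (1 / q) = 1 / p by field_simp; try ring,
            show (p - q) / p * (1 / q) = (p - q) / (p * q) by field_simp; try ring]
      _ = C ^ ((p - q) / (p * q)) * gagliardoP Ω s p u ^ (1 / p) := mul_comm _ _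
  refine step.trans (mul_le_mul' ?_ le_rfl)
  -- constant computation
  have hΩvol : volume Ω ≠ ⊤ := hΩbd.measure_lt_top.ne
  have hω : volume (ball (0 : Euc N) 1) ≠ ⊤ := measure_ball_lt_top.ne
  have hCeq : C = ENNReal.ofReal ((volume Ω).toReal *
      ((N : ℝ) * (volume (ball (0 : Euc N) 1)).toReal * (D ^ ε / ε))) := by
    rw [ENNReal.ofReal_mul ENNReal.toReal_nonneg,
      ENNReal.ofReal_mul (by positivity),
      ENNReal.ofReal_mul (by positivity : (0:ℝ) ≤ (N : ℝ)),
      ENNReal.ofReal_toReal hΩvol, ENNReal.ofReal_toReal hω, ENNReal.ofReal_natCast]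
  rw [hCeq, ENNReal.ofReal_rpow_of_nonneg (by positivity) (by positivity)]
  apply ENNReal.ofReal_le_ofReal
  have hrw : (volume Ω).toReal *
      ((N : ℝ) * (volume (ball (0 : Euc N) 1)).toReal * (D ^ ε / ε)) =
      ((N : ℝ) * (volume (ball (0 : Euc N) 1)).toReal * (volume Ω).toReal *
        (p - q) / ((s - t) * p * q)) * D ^ ε := by
    rw [hεdef]
    field_simp
    try ring
  rw [hrw, Real.mul_rpow (by positivity) (Real.rpow_nonneg hD0 _),
    ← Real.rpow_mul hD0,
    show ε * ((p - q) / (p * q)) = s - t by rw [hεdef]; field_simp; try ring]
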